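/- Peleg composition is not associative in general: with X = {a,b}, α = {(a,{a,b}), (a,{a}), (b,{a})} and β = {(a,{a}), (a,{b})}, one has (α ∗ α) ∗ β = {(a,{a}),(a,{b}),(b,{a}),(b,{b})} while α ∗ (α ∗ β) = {(a,{a}),(a,{b}),(b,{a}),(b,{b}),(a,{a,b})}, so (α ∗ α) ∗ β ≠ α ∗ (α ∗ β). -/
import Mathlib


open Set

/-- Ordinary relational composition. -/
def relComp {A B C : Type*} (R : Set (A × B)) (S : Set (B × C)) : Set (A × C) :=
  {p | ∃ b, (p.1, b) ∈ R ∧ (b, p.2) ∈ S}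

/-- Kleisli composition of multirelations. -/
def kleisliComp {X Y Z : Type*} (R : Set (X × Set Y)) (S : Set (Y × Set Z)) :
    Set (X × Set Z) :=
  {p | ∃ B, (p.1, B) ∈ R ∧ p.2 = ⋃₀ {C | ∃ b ∈ B, (b, C) ∈ S}}

/-- Kleisli lifting of a multirelation. -/
def kleisliLift {Y Z : Type*} (S : Set (Y × Set Z)) : Set (Set Y × Set Z) :=
  {p | p.2 = ⋃₀ {C | ∃ b ∈ p.1, (b, C) ∈ S}}

/-- Parikh lifting of a multirelation. -/
def parikhLift {Y Z : Type*} (S : Set (Y × Set Z)) : Set (Set Y × Set Z) :=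
  {p | ∀ b ∈ p.1, (b, p.2) ∈ S}

/-- Parikh composition of multirelations. -/
def parikhComp {X Y Z : Type*} (R : Set (X × Set Y)) (S : Set (Y × Set Z)) :
    Set (X × Set Z) :=
  {p | ∃ B, (p.1, B) ∈ R ∧ ∀ b ∈ B, (b, p.2) ∈ S}

/-- Peleg composition of multirelations. -/
def pelegComp {X Y Z : Type*} (R : Set (X × Set Y)) (S : Set (Y × Set Z)) :
    Set (X × Set Z) :=
  {p | ∃ B, (p.1, B) ∈ R ∧
    ∃ f : Y → Set Z, (∀ b ∈ B, (b, f b) ∈ S) ∧ p.2 = ⋃ b ∈ B, f b}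

/-- Peleg lifting of a multirelation. -/
def pelegLift {Y Z : Type*} (S : Set (Y × Set Z)) : Set (Set Y × Set Z) :=
  {p | ∃ f : Y → Set Z, (∀ b ∈ p.1, (b, f b) ∈ S) ∧ p.2 = ⋃ b ∈ p.1, f b}

/-- The singleton map 1_Y = {(y,{y})}. -/
def singletonMap (Y : Type*) : Set (Y × Set Y) := {p | p.2 = {p.1}}

/-- Converse of the membership relation: {(y,A) | y ∈ A}. -/
def memConv (Y : Type*) : Set (Y × Set Y) := {p | p.1 ∈ p.2}

/-- The inclusion relation Ξ on the powerset. -/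
def inclRel (Z : Type*) : Set (Set Z × Set Z) := {p | p.1 ⊆ p.2}

/-- Up-closed multirelations. -/
def upClosed {X Y : Type*} (R : Set (X × Set Y)) : Prop :=
  ∀ a B C, (a, B) ∈ R → B ⊆ C → (a, C) ∈ R

/-- Univalent relations (partial functions). -/
def isUnivalent {A B : Type*} (f : Set (A × B)) : Prop :=
  ∀ x y y', (x, y) ∈ f → (x, y') ∈ f → y = y'

/-- Domain of a relation. -/
def relDom {A B : Type*} (f : Set (A × B)) : Set A := {x | ∃ y, (x, y) ∈ f}

/-- Union-closed multirelations. -/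
def unionClosed {Z W : Type*} (T : Set (Z × Set W)) : Prop :=
  ∀ z (𝔅 : Set (Set W)), 𝔅.Nonempty → (∀ B ∈ 𝔅, (z, B) ∈ T) → (z, ⋃₀ 𝔅) ∈ T

def A0 : Set (Fin 2 × Set (Fin 2)) :=
  {p | (p.1 = 0 ∧ p.2 = {0, 1}) ∨ (p.1 = 0 ∧ p.2 = {0}) ∨ (p.1 = 1 ∧ p.2 = {0})}

def B0 : Set (Fin 2 × Set (Fin 2)) :=
  {p | (p.1 = 0 ∧ p.2 = {0}) ∨ (p.1 = 0 ∧ p.2 = {1})}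

lemma comp_ab : pelegComp A0 B0 =
    {p | (p.1 = 0 ∧ p.2 = {0}) ∨ (p.1 = 0 ∧ p.2 = {1}) ∨
         (p.1 = 1 ∧ p.2 = {0}) ∨ (p.1 = 1 ∧ p.2 = {1})} := by
  ext ⟨x, A⟩
  simp only [pelegComp, A0, B0, Set.mem_setOf_eq]
  constructor
  · rintro ⟨B, hB, f, hf, rfl⟩
    rcases hB with ⟨rfl, rfl⟩ | ⟨rfl, rfl⟩ | ⟨rfl, rfl⟩
    · have h1 := hf 1 (by simp)
      simp [show (1:Fin 2) ≠ 0 by decide] at h1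
    · have h0 := hf 0 (by simp)
      simp only [Set.mem_setOf_eq, true_and] at h0
      rcases h0 with h0 | h0 <;> simp [h0]
    · have h0 := hf 0 (by simp)
      simp only [Set.mem_setOf_eq, true_and] at h0
      rcases h0 with h0 | h0 <;> simp [h0]
  · rintro (⟨rfl, rfl⟩ | ⟨rfl, rfl⟩ | ⟨rfl, rfl⟩ | ⟨rfl, rfl⟩)
    · exact ⟨{0}, by simp [A0], fun _ => {0}, by simp, by simp⟩
    · exact ⟨{0}, by simp [A0], fun _ => {1}, by simp, by simp⟩
    · exact ⟨{0}, by simp [A0], fun _ => {0}, by simp, by simp⟩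
    · exact ⟨{0}, by simp [A0], fun _ => {1}, by simp, by simp⟩

def AA0 : Set (Fin 2 × Set (Fin 2)) :=
  {p | (p.1 = 0 ∧ p.2 = {0, 1}) ∨ (p.1 = 0 ∧ p.2 = {0}) ∨
       (p.1 = 1 ∧ p.2 = {0, 1}) ∨ (p.1 = 1 ∧ p.2 = {0})}

def AB0 : Set (Fin 2 × Set (Fin 2)) :=
  {p | (p.1 = 0 ∧ p.2 = {0}) ∨ (p.1 = 0 ∧ p.2 = {1}) ∨
       (p.1 = 1 ∧ p.2 = {0}) ∨ (p.1 = 1 ∧ p.2 = {1})}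

lemma comp_aab : pelegComp AA0 B0 =
    {p | (p.1 = 0 ∧ p.2 = {0}) ∨ (p.1 = 0 ∧ p.2 = {1}) ∨
         (p.1 = 1 ∧ p.2 = {0}) ∨ (p.1 = 1 ∧ p.2 = {1})} := by
  ext ⟨x, A⟩
  simp only [pelegComp, AA0, B0, Set.mem_setOf_eq]
  constructor
  · rintro ⟨B, hB, f, hf, rfl⟩
    rcases hB with ⟨rfl, rfl⟩ | ⟨rfl, rfl⟩ | ⟨rfl, rfl⟩ | ⟨rfl, rfl⟩
    · have h1 := hf 1 (by simp)
      simp [show (1:Fin 2) ≠ 0 by decide] at h1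
    · have h0 := hf 0 (by simp)
      simp only [Set.mem_setOf_eq, true_and] at h0
      rcases h0 with h0 | h0 <;> simp [h0]
    · have h1 := hf 1 (by simp)
      simp [show (1:Fin 2) ≠ 0 by decide] at h1
    · have h0 := hf 0 (by simp)
      simp only [Set.mem_setOf_eq, true_and] at h0
      rcases h0 with h0 | h0 <;> simp [h0]
  · rintro (⟨rfl, rfl⟩ | ⟨rfl, rfl⟩ | ⟨rfl, rfl⟩ | ⟨rfl, rfl⟩)
    · exact ⟨{0}, by simp [AA0], fun _ => {0}, by simp, by simp⟩
    · exact ⟨{0}, by simp [AA0], fun _ => {1}, by simp, by simp⟩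
    · exact ⟨{0}, by simp [AA0], fun _ => {0}, by simp, by simp⟩
    · exact ⟨{0}, by simp [AA0], fun _ => {1}, by simp, by simp⟩

lemma comp_a_ab : pelegComp A0 AB0 =
    {p | (p.1 = 0 ∧ p.2 = {0}) ∨ (p.1 = 0 ∧ p.2 = {1}) ∨
         (p.1 = 1 ∧ p.2 = {0}) ∨ (p.1 = 1 ∧ p.2 = {1}) ∨ (p.1 = 0 ∧ p.2 = {0, 1})} := by
  ext ⟨x, A⟩
  simp only [pelegComp, A0, AB0, Set.mem_setOf_eq]
  constructor
  · rintro ⟨B, hB, f, hf, rfl⟩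
    rcases hB with ⟨rfl, rfl⟩ | ⟨rfl, rfl⟩ | ⟨rfl, rfl⟩
    · have h0 := hf 0 (by simp)
      have h1 := hf 1 (by simp)
      simp only [Set.mem_setOf_eq, show (0:Fin 2) ≠ 1 by decide,
        show (1:Fin 2) ≠ 0 by decide, false_and, false_or, true_and, or_false] at h0 h1
      rcases h0 with h0 | h0 <;> rcases h1 with h1 | h1 <;>
        simp [h0, h1, Set.ext_iff, Fin.forall_fin_two]
    · have h0 := hf 0 (by simp)
      simp only [Set.mem_setOf_eq, show (0:Fin 2) ≠ 1 by decide,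
        false_and, false_or, true_and, or_false] at h0
      rcases h0 with h0 | h0 <;> simp [h0]
    · have h0 := hf 0 (by simp)
      simp only [Set.mem_setOf_eq, show (0:Fin 2) ≠ 1 by decide,
        false_and, false_or, true_and, or_false] at h0
      rcases h0 with h0 | h0 <;> simp [h0]
  · rintro (⟨rfl, rfl⟩ | ⟨rfl, rfl⟩ | ⟨rfl, rfl⟩ | ⟨rfl, rfl⟩ | ⟨rfl, rfl⟩)
    · exact ⟨{0}, by simp, fun _ => {0}, by simp [AB0], by simp⟩
    · exact ⟨{0}, by simp, fun _ => {1}, by simp [AB0], by simp⟩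
    · exact ⟨{0}, by simp, fun _ => {0}, by simp [AB0], by simp⟩
    · exact ⟨{0}, by simp, fun _ => {1}, by simp [AB0], by simp⟩
    · refine ⟨{0, 1}, by simp, fun b => if b = 0 then {0} else {1}, ?_, ?_⟩
      · intro b hb
        fin_cases b <;> simp [AB0]
      · ext z
        fin_cases z <;> simp [Set.biUnion_insert]
lemma comp_aa : pelegComp A0 A0 =
    {p | (p.1 = 0 ∧ p.2 = {0, 1}) ∨ (p.1 = 0 ∧ p.2 = {0}) ∨
         (p.1 = 1 ∧ p.2 = {0, 1}) ∨ (p.1 = 1 ∧ p.2 = {0})} := by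
  ext ⟨x, A⟩
  simp only [pelegComp, A0, Set.mem_setOf_eq]
  constructor
  · rintro ⟨B, hB, f, hf, rfl⟩
    rcases hB with ⟨rfl, rfl⟩ | ⟨rfl, rfl⟩ | ⟨rfl, rfl⟩
    · have h0 := hf 0 (by simp)
      have h1 := hf 1 (by simp)
      simp only [Set.mem_setOf_eq, show (0:Fin 2) ≠ 1 by decide, false_and, false_or,
        show (1:Fin 2) ≠ 0 by decide, true_and, or_false] at h0 h1
      rcases h0 with h0 | h0 <;>
        simp [h0, h1, Set.biUnion_insert, Set.ext_iff, Fin.forall_fin_two]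
    · have h0 := hf 0 (by simp)
      simp only [Set.mem_setOf_eq, show (0:Fin 2) ≠ 1 by decide, false_and, false_or,
        true_and, or_false] at h0
      rcases h0 with h0 | h0 <;> simp [h0]
    · have h0 := hf 0 (by simp)
      simp only [Set.mem_setOf_eq, show (0:Fin 2) ≠ 1 by decide, false_and, false_or,
        true_and, or_false] at h0
      rcases h0 with h0 | h0 <;> simp [h0]
  · rintro (⟨rfl, rfl⟩ | ⟨rfl, rfl⟩ | ⟨rfl, rfl⟩ | ⟨rfl, rfl⟩)
    · exact ⟨{0}, by simp, fun _ => {0,1}, by simp, by simp⟩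
    · exact ⟨{0}, by simp, fun _ => {0}, by simp, by simp⟩
    · exact ⟨{0}, by simp, fun _ => {0,1}, by simp, by simp⟩
    · exact ⟨{0}, by simp, fun _ => {0}, by simp, by simp⟩
theorem peleg_not_assoc :
    let α : Set (Fin 2 × Set (Fin 2)) :=
      {p | (p.1 = 0 ∧ p.2 = {0, 1}) ∨ (p.1 = 0 ∧ p.2 = {0}) ∨ (p.1 = 1 ∧ p.2 = {0})}
    let β : Set (Fin 2 × Set (Fin 2)) :=
      {p | (p.1 = 0 ∧ p.2 = {0}) ∨ (p.1 = 0 ∧ p.2 = {1})}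
    pelegComp (pelegComp α α) β =
      {p | (p.1 = 0 ∧ p.2 = {0}) ∨ (p.1 = 0 ∧ p.2 = {1}) ∨
           (p.1 = 1 ∧ p.2 = {0}) ∨ (p.1 = 1 ∧ p.2 = {1})} ∧
    pelegComp α (pelegComp α β) =
      {p | (p.1 = 0 ∧ p.2 = {0}) ∨ (p.1 = 0 ∧ p.2 = {1}) ∨
           (p.1 = 1 ∧ p.2 = {0}) ∨ (p.1 = 1 ∧ p.2 = {1}) ∨ (p.1 = 0 ∧ p.2 = {0, 1})} ∧
    pelegComp (pelegComp α α) β ≠ pelegComp α (pelegComp α β) := by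
  intro α β
  have hα : α = A0 := rfl
  have hβ : β = B0 := rfl
  have haa : pelegComp A0 A0 = AA0 := comp_aa
  have hab : pelegComp A0 B0 = AB0 := comp_ab
  have h1 : pelegComp (pelegComp α α) β =
      {p : Fin 2 × Set (Fin 2) | (p.1 = 0 ∧ p.2 = {0}) ∨ (p.1 = 0 ∧ p.2 = {1}) ∨
           (p.1 = 1 ∧ p.2 = {0}) ∨ (p.1 = 1 ∧ p.2 = {1})} := by
    rw [hα, hβ, haa]; exact comp_aab
  have h2 : pelegComp α (pelegComp α β) =
      {p : Fin 2 × Set (Fin 2) | (p.1 = 0 ∧ p.2 = {0}) ∨ (p.1 = 0 ∧ p.2 = {1}) ∨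
           (p.1 = 1 ∧ p.2 = {0}) ∨ (p.1 = 1 ∧ p.2 = {1}) ∨ (p.1 = 0 ∧ p.2 = {0, 1})} := by
    rw [hα, hβ, hab]; exact comp_a_ab
  refine ⟨h1, h2, ?_⟩
  rw [h1, h2]
  intro h
  have hm : ((0:Fin 2), ({0,1}:Set (Fin 2))) ∈
      {p : Fin 2 × Set (Fin 2) | (p.1 = 0 ∧ p.2 = {0}) ∨ (p.1 = 0 ∧ p.2 = {1}) ∨
           (p.1 = 1 ∧ p.2 = {0}) ∨ (p.1 = 1 ∧ p.2 = {1})} := by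
    rw [h]; simp
  simp [Set.ext_iff, Fin.forall_fin_two, show (0:Fin 2) ≠ 1 by decide,
    show (1:Fin 2) ≠ 0 by decide] at hm
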